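/- The conformable Laguerre function y(x) = Σ_{k=0}^{n} (−1)^k n!/(α^k (n−k)! (k!)²) x^{kα} solves the conformable Laguerre equation x^α T_α(T_α y)(x) + (α − x^α) T_α y(x) + n α y(x) = 0 for all x > 0, where α ∈ (0,1] and n ∈ ℕ. -/

import Mathlib

open Finset

/-- The conformable derivative of order `α`. -/
noncomputable def cderiv (α : ℝ) (f : ℝ → ℝ) : ℝ → ℝ :=
  fun x => x ^ (1 - α) * deriv f x

/-- The conformable Laguerre polynomial `L_n(x^α/α)`. -/
noncomputable def confLaguerre (α : ℝ) (n : ℕ) : ℝ → ℝ :=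
  fun x => ∑ k ∈ range (n + 1),
    (-1 : ℝ) ^ k * (n.factorial : ℝ) /
        (α ^ k * ((n - k).factorial : ℝ) * ((k.factorial : ℝ)) ^ 2)
      * x ^ (k * α)

private lemma hasDerivAt_sum_rpow (m : ℕ) (c e : ℕ → ℝ) {x : ℝ} (hx : 0 < x) :
    HasDerivAt (fun y : ℝ => ∑ k ∈ range m, c k * y ^ (e k))
      (∑ k ∈ range m, c k * (e k * x ^ (e k - 1))) x := by
  apply HasDerivAt.fun_sum
  intro k _
  exact (Real.hasDerivAt_rpow_const (Or.inl hx.ne')).const_mul (c k)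

/-- The conformable Laguerre function solves the conformable Laguerre equation. -/
theorem confLaguerre_solves (α : ℝ) (hα0 : 0 < α) (hα1 : α ≤ 1) (n : ℕ) :
    ∀ x > 0,
      x ^ α * cderiv α (cderiv α (confLaguerre α n)) x
        + (α - x ^ α) * cderiv α (confLaguerre α n) x
        + n * α * confLaguerre α n x = 0 := by
  set c : ℕ → ℝ := fun k => (-1 : ℝ) ^ k * (n.factorial : ℝ) /
      (α ^ k * ((n - k).factorial : ℝ) * ((k.factorial : ℝ)) ^ 2) with hc
  have hyfun : confLaguerre α n = fun y : ℝ => ∑ k ∈ range (n + 1), c k * y ^ ((k : ℝ) * α) := rfl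
  -- first conformable derivative on (0,∞)
  have hc1 : ∀ y ∈ Set.Ioi (0 : ℝ), cderiv α (confLaguerre α n) y
      = ∑ k ∈ range (n + 1), (c k * ((k : ℝ) * α)) * y ^ ((k : ℝ) * α - α) := by
    intro y hy
    have hy' : (0 : ℝ) < y := hy
    have hd := hasDerivAt_sum_rpow (n + 1) c (fun k => (k : ℝ) * α) hy'
    rw [cderiv, hyfun, hd.deriv, Finset.mul_sum]
    refine Finset.sum_congr rfl fun k _ => ?_
    rw [show (k : ℝ) * α - α = (1 - α) + ((k : ℝ) * α - 1) by ring, Real.rpow_add hy']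
    ring
  intro x hx
  -- second conformable derivative at x
  have hev : cderiv α (confLaguerre α n) =ᶠ[nhds x]
      fun y => ∑ k ∈ range (n + 1), (c k * ((k : ℝ) * α)) * y ^ ((k : ℝ) * α - α) :=
    Filter.eventuallyEq_of_mem (Ioi_mem_nhds hx) hc1
  have hd2 := hasDerivAt_sum_rpow (n + 1) (fun k => c k * ((k : ℝ) * α))
      (fun k => (k : ℝ) * α - α) hx
  have hc2 : cderiv α (cderiv α (confLaguerre α n)) x
      = ∑ k ∈ range (n + 1),
          (c k * ((k : ℝ) * α * ((k : ℝ) * α - α))) * x ^ ((k : ℝ) * α - 2 * α) := by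
    rw [cderiv, hev.deriv_eq, hd2.deriv, Finset.mul_sum]
    refine Finset.sum_congr rfl fun k _ => ?_
    rw [show (k : ℝ) * α - 2 * α = (1 - α) + ((k : ℝ) * α - α - 1) by ring, Real.rpow_add hx]
    ring
  rw [hc2, hc1 x hx, hyfun]
  -- reduce to two sums
  have key : (∑ k ∈ range (n + 1), c k * ((k : ℝ) ^ 2 * α ^ 2) * x ^ ((k : ℝ) * α - α))
      + (∑ k ∈ range (n + 1), c k * (((n : ℝ) - k) * α) * x ^ ((k : ℝ) * α)) = 0 := by
    rw [Finset.sum_range_succ' _ n, Finset.sum_range_succ]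
    have h0 : c 0 * ((0 : ℕ) ^ 2 * α ^ 2 : ℝ) * x ^ (((0 : ℕ) : ℝ) * α - α) = 0 := by
      norm_num
    have hn : c n * (((n : ℝ) - n) * α) * x ^ ((n : ℝ) * α) = 0 := by
      simp
    rw [h0, hn, add_zero, add_zero, ← Finset.sum_add_distrib]
    refine Finset.sum_eq_zero fun k hk => ?_
    have hkn : k < n := Finset.mem_range.mp hk
    have hxe : x ^ (((k + 1 : ℕ) : ℝ) * α - α) = x ^ ((k : ℝ) * α) := by
      congr 1
      push_cast
      ring
    rw [hxe, ← add_mul]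
    apply mul_eq_zero_of_left
    -- coefficient identity
    have hsub : n - (k + 1) = n - k - 1 := by omega
    have hfac : ((n - k).factorial : ℝ) = ((n - k : ℕ) : ℝ) * ((n - k - 1).factorial : ℝ) := by
      rw [← Nat.cast_mul, Nat.mul_factorial_pred (by omega : n - k ≠ 0)]
    have hcast : ((n : ℝ) - (k : ℝ)) = ((n - k : ℕ) : ℝ) := by
      rw [Nat.cast_sub hkn.le]
    have hαk : α ^ k ≠ 0 := pow_ne_zero _ hα0.ne'
    have hα : α ≠ 0 := hα0.ne'
    have hf1 : ((n - k - 1).factorial : ℝ) ≠ 0 := Nat.cast_ne_zero.mpr (Nat.factorial_ne_zero _)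
    have hf2 : ((k.factorial : ℝ)) ≠ 0 := Nat.cast_ne_zero.mpr (Nat.factorial_ne_zero _)
    have hnk : ((n - k : ℕ) : ℝ) ≠ 0 := by
      have : 0 < n - k := by omega
      positivity
    have hk1 : ((k : ℝ) + 1) ≠ 0 := by positivity
    rw [hc]
    simp only [hsub, hfac, hcast, Nat.factorial_succ, pow_succ]
    push_cast
    field_simp
    ring
  rw [← key]
  -- now an algebraic identity between sums of powers
  simp only []
  rw [Finset.mul_sum, Finset.mul_sum, Finset.mul_sum, ← Finset.sum_add_distrib,
    ← Finset.sum_add_distrib, ← Finset.sum_add_distrib]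
  refine Finset.sum_congr rfl fun k _ => ?_
  have e1 : x ^ ((k : ℝ) * α - α) = x ^ α * x ^ ((k : ℝ) * α - 2 * α) := by
    rw [← Real.rpow_add hx]
    congr 1
    ring
  have e2 : x ^ ((k : ℝ) * α) = x ^ α * (x ^ α * x ^ ((k : ℝ) * α - 2 * α)) := by
    rw [← Real.rpow_add hx, ← Real.rpow_add hx]
    congr 1
    ring
  rw [e1, e2]
  ring
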